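/- The Koranyi inversion distorts the Cygan metric by the formula d_Cyg(ι(p), ι(q)) = d_Cyg(p,q) / (|p|₀ · |q|₀) for all p, q ∈ ℂ × ℝ ∖ {(0,0)}. -/

import Mathlib

noncomputable section

open Complex

/-- Heisenberg product on ℂ × ℝ. -/
def hMul (p q : ℂ × ℝ) : ℂ × ℝ :=
  (p.1 + q.1, p.2 + q.2 + 2 * ((starRingEnd ℂ) p.1 * q.1).im)

/-- Heisenberg inverse. -/
def hInv (p : ℂ × ℝ) : ℂ × ℝ := (-p.1, -p.2)

/-- Heisenberg (Koranyi) norm. -/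
def hNorm (p : ℂ × ℝ) : ℝ := (‖p.1‖ ^ 4 + p.2 ^ 2) ^ ((1 : ℝ)/4)

/-- Cygan metric. -/
def dCyg (p q : ℂ × ℝ) : ℝ :=
  (‖((‖p.1 - q.1‖ ^ 2 : ℝ) : ℂ)
    + Complex.I * ((-p.2 + q.2 - 2 * ((starRingEnd ℂ) q.1 * p.1).im : ℝ) : ℂ)‖) ^ ((1 : ℝ)/2)

/-- Koranyi inversion. -/
def kInv (p : ℂ × ℝ) : ℂ × ℝ :=
  (-p.1 / (((‖p.1‖ ^ 2 : ℝ) : ℂ) - Complex.I * (p.2 : ℂ)),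
   -p.2 / (‖p.1‖ ^ 4 + p.2 ^ 2))

def Aq (p : ℂ × ℝ) : ℂ := ((‖p.1‖ ^ 2 : ℝ) : ℂ) - Complex.I * (p.2 : ℂ)

lemma Aq_re (p : ℂ × ℝ) : (Aq p).re = ‖p.1‖ ^ 2 := by simp [Aq, ← Complex.ofReal_pow]
lemma Aq_im (p : ℂ × ℝ) : (Aq p).im = -p.2 := by simp [Aq, ← Complex.ofReal_pow]

lemma Aq_ne_zero {p : ℂ × ℝ} (hp : p ≠ ((0:ℂ),(0:ℝ))) : Aq p ≠ 0 := by
  intro h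
  apply hp
  have h1 := congrArg Complex.re h
  have h2 := congrArg Complex.im h
  rw [Aq_re] at h1
  rw [Aq_im] at h2
  simp at h1 h2
  exact Prod.ext h1 h2

lemma normSq_Aq (p : ℂ × ℝ) : Complex.normSq (Aq p) = ‖p.1‖ ^ 4 + p.2 ^ 2 := by
  rw [Complex.normSq_apply, Aq_re, Aq_im]; ring

lemma abs_Aq (p : ℂ × ℝ) : ‖Aq p‖ = hNorm p ^ 2 := by
  have h0 : (0:ℝ) ≤ ‖p.1‖ ^ 4 + p.2 ^ 2 := by positivity
  have h2 : hNorm p ^ 2 = (‖p.1‖ ^ 4 + p.2 ^ 2) ^ ((1:ℝ)/2) := by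
    rw [hNorm, ← Real.rpow_natCast ((‖p.1‖ ^ 4 + p.2 ^ 2) ^ ((1:ℝ)/4)) 2,
      ← Real.rpow_mul h0]
    norm_num
  rw [Complex.norm_def, normSq_Aq, h2, Real.sqrt_eq_rpow]

lemma A_kInv (p : ℂ × ℝ) (hp : p ≠ ((0:ℂ),(0:ℝ))) : Aq (kInv p) = (Aq p)⁻¹ := by
  have ha := Aq_ne_zero hp
  have hns : Complex.normSq (Aq p) ≠ 0 := (Complex.normSq_pos.mpr ha).ne'
  have h1 : (kInv p).1 = -p.1 / Aq p := rfl
  have h2 : (kInv p).2 = -p.2 / Complex.normSq (Aq p) := by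
    rw [normSq_Aq]; rfl
  have habs : ‖(kInv p).1‖ ^ 2 = Complex.normSq p.1 / Complex.normSq (Aq p) := by
    rw [h1, Complex.sq_norm, Complex.normSq_div, Complex.normSq_neg]
  have hc : (starRingEnd ℂ) (Aq p) = ((‖p.1‖ ^2 :ℝ):ℂ) + Complex.I * p.2 := by
    unfold Aq
    simp [map_sub, map_mul, Complex.conj_I]
  rw [show Aq (kInv p) = ((‖(kInv p).1‖ ^ 2 : ℝ) : ℂ) - Complex.I * ((kInv p).2 : ℂ) from rfl,
    habs, h2, Complex.inv_def, hc]
  rw [Complex.normSq_eq_norm_sq, normSq_Aq]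
  push_cast
  have hden : (((‖p.1‖ : ℂ)) ^ 4 + (p.2:ℂ) ^ 2) ≠ 0 := by
    have : ((‖p.1‖ ^ 4 + p.2 ^ 2 : ℝ) : ℂ) ≠ 0 := by
      rw [← normSq_Aq]; exact_mod_cast (Complex.normSq_pos.mpr ha).ne'
    push_cast at this; exact this
  field_simp
  ring

lemma dCyg_eq (p q : ℂ × ℝ) :
    dCyg p q = (‖Aq p + (starRingEnd ℂ) (Aq q)
      - 2 * (starRingEnd ℂ) q.1 * p.1‖) ^ ((1:ℝ)/2) := by
  unfold dCyg
  congr 1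
  congr 1
  apply Complex.ext
  · simp only [Complex.add_re, Complex.sub_re, Complex.mul_re, Complex.mul_im,
      Complex.ofReal_re, Complex.ofReal_im, Complex.I_re, Complex.I_im,
      Complex.conj_re, Complex.conj_im, Aq_re, Aq_im, Complex.sq_norm,
      Complex.normSq_apply, Complex.sub_im, Complex.re_ofNat, Complex.im_ofNat]
    ring
  · simp only [Complex.add_im, Complex.sub_im, Complex.mul_re, Complex.mul_im,
      Complex.ofReal_re, Complex.ofReal_im, Complex.I_re, Complex.I_im,
      Complex.conj_re, Complex.conj_im, Aq_re, Aq_im, Complex.sq_norm,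
      Complex.normSq_apply, Complex.sub_re, Complex.re_ofNat, Complex.im_ofNat]
    ring

lemma sq_rpow_half {x : ℝ} (hx : 0 ≤ x) : (x ^ 2) ^ ((1:ℝ)/2) = x := by
  rw [← Real.rpow_natCast x 2, ← Real.rpow_mul hx]
  norm_num

lemma hNorm_nonneg (p : ℂ × ℝ) : 0 ≤ hNorm p := by
  unfold hNorm; positivity

/-- Distortion of the Cygan metric by the Koranyi inversion. -/
theorem kInv_cygan_distortion (p q : ℂ × ℝ)
    (hp : p ≠ ((0 : ℂ), (0 : ℝ))) (hq : q ≠ ((0 : ℂ), (0 : ℝ))) :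
    dCyg (kInv p) (kInv q) = dCyg p q / (hNorm p * hNorm q) := by
  have ha := Aq_ne_zero hp
  have hb := Aq_ne_zero hq
  have hb' : (starRingEnd ℂ) (Aq q) ≠ 0 := by
    simpa using hb
  have hB : Aq (kInv p) + (starRingEnd ℂ) (Aq (kInv q))
      - 2 * (starRingEnd ℂ) ((kInv q).1) * ((kInv p).1)
      = (Aq p + (starRingEnd ℂ) (Aq q) - 2 * (starRingEnd ℂ) q.1 * p.1)
        / (Aq p * (starRingEnd ℂ) (Aq q)) := by
    rw [A_kInv p hp, A_kInv q hq, map_inv₀,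
      show (kInv p).1 = -p.1 / Aq p from rfl,
      show (kInv q).1 = -q.1 / Aq q from rfl, map_div₀, map_neg]
    field_simp
    ring
  rw [dCyg_eq, dCyg_eq, hB, norm_div, norm_mul, Complex.norm_conj, abs_Aq, abs_Aq,
    Real.div_rpow (by positivity) (by positivity),
    Real.mul_rpow (by positivity) (by positivity),
    sq_rpow_half (hNorm_nonneg p), sq_rpow_half (hNorm_nonneg q)]
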